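/- Let G be a finite group. The orbit-space functor from compact Hausdorff G-spaces to compact Hausdorff spaces preserves cofiltered limits: if (X_i)_{i∈I} is a cofiltered diagram of compact Hausdorff G-spaces with limit X = lim_i X_i, then the canonical continuous map X/G → lim_i (X_i/G) is a homeomorphism. -/

import Mathlib

variable {G : Type*} [Group G]
variable {I : Type*} [Preorder I]
variable {Xs : I → Type*}

/-- The inverse limit of a diagram of topological spaces indexed by a preorder. -/
def InvLim (F : ∀ ⦃i j : I⦄, i ≤ j → Xs i → Xs j) : Type _ :=
  {u : ∀ i, Xs i // ∀ ⦃i j : I⦄ (h : i ≤ j), F h (u i) = u j}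

instance [∀ i, TopologicalSpace (Xs i)] (F : ∀ ⦃i j : I⦄, i ≤ j → Xs i → Xs j) :
    TopologicalSpace (InvLim F) :=
  instTopologicalSpaceSubtype

/-- The orbit equivalence relation on the inverse limit, for the diagonal `G`-action. -/
def invLimOrbitSetoid [∀ i, MulAction G (Xs i)]
    (F : ∀ ⦃i j : I⦄, i ≤ j → Xs i → Xs j) : Setoid (InvLim F) where
  r u v := ∃ g : G, ∀ i, g • u.1 i = v.1 i
  iseqv := by
    constructor
    · exact fun u => ⟨1, fun i => one_smul _ _⟩
    · rintro u v ⟨g, hg⟩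
      exact ⟨g⁻¹, fun i => by rw [← hg i, inv_smul_smul]⟩
    · rintro u v w ⟨g, hg⟩ ⟨g', hg'⟩
      exact ⟨g' * g, fun i => by rw [mul_smul, hg i, hg' i]⟩

/-- The map induced by an equivariant transition map on orbit spaces. -/
def orbitQuotMap [∀ i, MulAction G (Xs i)]
    (F : ∀ ⦃i j : I⦄, i ≤ j → Xs i → Xs j)
    (hFe : ∀ ⦃i j : I⦄ (h : i ≤ j) (g : G) (x : Xs i), F h (g • x) = g • F h x)
    ⦃i j : I⦄ (h : i ≤ j) :
    Quotient (MulAction.orbitRel G (Xs i)) → Quotient (MulAction.orbitRel G (Xs j)) :=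
  Quotient.map (F h) (by
    rintro x y ⟨g, rfl⟩
    exact ⟨g, (hFe h g y).symm⟩)

/-- The cofiltered limit of the orbit spaces `X_i/G`. -/
def InvLimOrbits [∀ i, MulAction G (Xs i)]
    (F : ∀ ⦃i j : I⦄, i ≤ j → Xs i → Xs j)
    (hFe : ∀ ⦃i j : I⦄ (h : i ≤ j) (g : G) (x : Xs i), F h (g • x) = g • F h x) :
    Type _ :=
  {v : ∀ i, Quotient (MulAction.orbitRel G (Xs i)) //
    ∀ ⦃i j : I⦄ (h : i ≤ j), orbitQuotMap F hFe h (v i) = v j}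

instance [∀ i, TopologicalSpace (Xs i)] [∀ i, MulAction G (Xs i)]
    (F : ∀ ⦃i j : I⦄, i ≤ j → Xs i → Xs j)
    (hFe : ∀ ⦃i j : I⦄ (h : i ≤ j) (g : G) (x : Xs i), F h (g • x) = g • F h x) :
    TopologicalSpace (InvLimOrbits F hFe) :=
  instTopologicalSpaceSubtype

/-- The canonical map `(lim_i X_i)/G → lim_i (X_i/G)`. -/
def orbitComparisonMap [∀ i, MulAction G (Xs i)]
    (F : ∀ ⦃i j : I⦄, i ≤ j → Xs i → Xs j)
    (hFe : ∀ ⦃i j : I⦄ (h : i ≤ j) (g : G) (x : Xs i), F h (g • x) = g • F h x) :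
    Quotient (invLimOrbitSetoid (G := G) F) → InvLimOrbits F hFe :=
  Quotient.lift
    (fun u => ⟨fun i => Quotient.mk _ (u.1 i), fun i j h => by
      show orbitQuotMap F hFe h (Quotient.mk _ (u.1 i)) = Quotient.mk _ (u.1 j)
      rw [← u.2 h]
      rfl⟩)
    (by
      rintro u v ⟨g, hg⟩
      refine Subtype.ext (funext fun i => Quotient.sound ?_)
      exact ⟨g⁻¹, by simp [← hg i]⟩)

/-- For a finite group `G`, the orbit-space functor on compact Hausdorff
`G`-spaces preserves cofiltered limits: the canonical continuous map
`(lim_i X_i)/G → lim_i (X_i/G)` is a homeomorphism. -/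
theorem bredon_orbit_functor_preserves_cofiltered_limits
    [Finite G] [IsDirected I (· ≥ ·)] [Nonempty I]
    [∀ i, TopologicalSpace (Xs i)] [∀ i, CompactSpace (Xs i)] [∀ i, T2Space (Xs i)]
    [∀ i, MulAction G (Xs i)]
    (hact : ∀ (i : I) (g : G), Continuous fun x : Xs i => g • x)
    (F : ∀ ⦃i j : I⦄, i ≤ j → Xs i → Xs j)
    (hFc : ∀ ⦃i j : I⦄ (h : i ≤ j), Continuous (F h))
    (hFid : ∀ (i : I) (x : Xs i), F (le_refl i) x = x)
    (hFcomp : ∀ ⦃i j k : I⦄ (hij : i ≤ j) (hjk : j ≤ k) (x : Xs i),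
      F hjk (F hij x) = F (hij.trans hjk) x)
    (hFe : ∀ ⦃i j : I⦄ (h : i ≤ j) (g : G) (x : Xs i), F h (g • x) = g • F h x) :
    IsHomeomorph (orbitComparisonMap F hFe) := by
  classical
  haveI : ∀ i, ContinuousConstSMul G (Xs i) := fun i => ⟨hact i⟩
  haveI hT2i : ∀ i, T2Space (Quotient (MulAction.orbitRel G (Xs i))) := fun i => inferInstance
  -- The domain is compact
  haveI hXc : CompactSpace (InvLim F) := by
    have h1 : IsClosed {u : ∀ i, Xs i | ∀ ⦃i j : I⦄ (h : i ≤ j), F h (u i) = u j} := by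
      have he : {u : ∀ i, Xs i | ∀ ⦃i j : I⦄ (h : i ≤ j), F h (u i) = u j}
          = ⋂ (i) (j) (h : i ≤ j), {u : ∀ i, Xs i | F h (u i) = u j} := by
        ext u
        simp only [Set.mem_setOf_eq, Set.mem_iInter]
      rw [he]
      exact isClosed_iInter fun i => isClosed_iInter fun j => isClosed_iInter fun h =>
        isClosed_eq ((hFc h).comp (continuous_apply i)) (continuous_apply j)
    exact isCompact_iff_compactSpace.mp h1.isCompact
  haveI : CompactSpace (Quotient (invLimOrbitSetoid (G := G) F)) := Quotient.compactSpace
  haveI : T2Space (InvLimOrbits F hFe) :=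
    (inferInstance : T2Space {v : ∀ i, Quotient (MulAction.orbitRel G (Xs i)) //
      ∀ ⦃i j : I⦄ (h : i ≤ j), orbitQuotMap F hFe h (v i) = v j})
  rw [isHomeomorph_iff_continuous_bijective]
  refine ⟨?_, ?_, ?_⟩
  · -- continuity
    apply Continuous.quotient_lift
    apply Continuous.subtype_mk
    exact continuous_pi fun i =>
      continuous_quot_mk.comp ((continuous_apply i).comp continuous_subtype_val)
  · -- injectivity
    rintro ⟨u⟩ ⟨v⟩ huv
    have hiv : ∀ i, ∃ g : G, g • u.1 i = v.1 i := by
      intro i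
      have := congrFun (congrArg Subtype.val huv) i
      obtain ⟨g, hg⟩ := Quotient.exact this
      exact ⟨g⁻¹, by rw [← hg, inv_smul_smul]⟩
    set S : I → Set G := fun i => {g : G | g • u.1 i = v.1 i} with hS
    have hSne : ∀ i, (S i).Nonempty := fun i => hiv i
    have hSmono : ∀ ⦃i j : I⦄, i ≤ j → S i ⊆ S j := by
      intro i j h g hg
      show g • u.1 j = v.1 j
      rw [← u.2 h, ← v.2 h, ← hFe h]
      exact congrArg (F h) hg
    have hfin : ∀ i, (S i).Finite := fun i => Set.toFinite _
    -- choose an index with minimal orbit-stabilizer set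
    have hne : (Set.range fun i => (S i).ncard).Nonempty :=
      ⟨_, ⟨Classical.arbitrary I, rfl⟩⟩
    obtain ⟨i0, hi0⟩ := Nat.sInf_mem hne
    have hi0' : (S i0).ncard = sInf (Set.range fun i => (S i).ncard) := hi0
    have hmin : ∀ j, (S i0).ncard ≤ (S j).ncard := fun j => by
      rw [hi0']; exact Nat.sInf_le ⟨j, rfl⟩
    have hsub : ∀ j, S i0 ⊆ S j := by
      intro j
      obtain ⟨k, hk1, hk2⟩ := directed_of (· ≥ ·) i0 j
      have h1 : S k ⊆ S i0 := hSmono hk1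
      have h2 : S k = S i0 := Set.eq_of_subset_of_ncard_le h1 (hmin k) (hfin i0)
      rw [← h2]
      exact hSmono hk2
    obtain ⟨g, hg⟩ := hSne i0
    exact Quotient.sound ⟨g, fun i => hsub i hg⟩
  · -- surjectivity
    show Function.Surjective (β := {v : ∀ i, _root_.Quotient (MulAction.orbitRel G (Xs i)) //
      ∀ ⦃i j : I⦄ (h : i ≤ j), orbitQuotMap F hFe h (v i) = v j}) (orbitComparisonMap F hFe)
    rintro ⟨v, hv⟩
    let T : CategoryTheory.Functor I (Type _) :=
      { obj := fun i => {x : Xs i // Quotient.mk (MulAction.orbitRel G (Xs i)) x = v i}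
        map := fun {i j} f => TypeCat.ofHom fun x => ⟨F f.le x.1, by
          calc Quotient.mk (MulAction.orbitRel G (Xs j)) (F f.le x.1)
              = orbitQuotMap F hFe f.le (Quotient.mk (MulAction.orbitRel G (Xs i)) x.1) := rfl
            _ = orbitQuotMap F hFe f.le (v i) := congrArg (orbitQuotMap F hFe f.le) x.2
            _ = v j := hv f.le⟩
        map_id := fun i => CategoryTheory.ConcreteCategory.hom_ext _ _ fun x => Subtype.ext (hFid i x.1)
        map_comp := fun {i j k} f g => CategoryTheory.ConcreteCategory.hom_ext _ _ fun x => Subtype.ext (hFcomp f.le g.le x.1).symm }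
    haveI hfin : ∀ i, Finite (T.obj i) := by
      intro i
      obtain ⟨w, hw⟩ := Quotient.exists_rep (v i)
      haveI := (Set.finite_range fun g : G => g • w).to_subtype
      have hmem : ∀ x : T.obj i, (x.1 : Xs i) ∈ Set.range fun g : G => g • w := by
        intro x
        have hx : MulAction.orbitRel G (Xs i) x.1 w := Quotient.exact (x.2.trans hw.symm)
        rw [MulAction.orbitRel_apply] at hx
        exact hx
      refine Finite.of_injective (fun x : T.obj i =>
        (⟨x.1, hmem x⟩ : Set.range fun g : G => g • w)) ?_
      intro a b h
      have hab : (⟨a.1, hmem a⟩ : Set.range fun g : G => g • w).1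
          = (⟨b.1, hmem b⟩ : Set.range fun g : G => g • w).1 := congrArg Subtype.val h
      exact Subtype.ext hab
    haveI hne : ∀ i, Nonempty (T.obj i) := by
      intro i
      obtain ⟨w, hw⟩ := Quotient.exists_rep (v i)
      exact ⟨⟨w, hw⟩⟩
    obtain ⟨u, hu⟩ := nonempty_sections_of_finite_cofiltered_system T
    refine ⟨Quotient.mk _ (⟨fun i => (u i).1, fun i j h =>
      congrArg Subtype.val (hu (CategoryTheory.homOfLE h))⟩ : InvLim F), ?_⟩
    exact Subtype.ext (funext fun i => (u i).2)
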